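/- For every integer k ≥ 4, we have f(k,k,1) ≤ 3k − 4; that is, there is a (k,1)-cover of 𝔽₂ᵏ consisting of at most 3k − 4 affine hyperplanes. -/
import Mathlib

open scoped Classical

noncomputable section

abbrev F2 : Type := ZMod 2

/-- Number of members of the multiset `H` (counted with multiplicity) containing `x`. -/
def covCount (n : ℕ) (H : Multiset (AffineSubspace F2 (Fin n → F2))) (x : Fin n → F2) : ℕ :=
  Multiset.countP (fun S => x ∈ S) H

/-- `H` is a (k,d)-cover of 𝔽₂ⁿ: a multiset of (n-d)-dimensional affine subspaces covering
every nonzero point at least `k` times and the origin at most `k-1` times. -/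
def IsCover (n k d : ℕ) (H : Multiset (AffineSubspace F2 (Fin n → F2))) : Prop :=
  (∀ S ∈ H, (S : Set (Fin n → F2)).Nonempty ∧ Module.finrank F2 S.direction = n - d) ∧
  (∀ x : Fin n → F2, x ≠ 0 → k ≤ covCount n H x) ∧
  covCount n H 0 < k

/-- `H` is a (k,d;s)-cover of 𝔽₂ⁿ: a (k,d)-cover in which the origin lies in exactly `s`
members (counted with multiplicity). -/
def IsCoverExact (n k d s : ℕ) (H : Multiset (AffineSubspace F2 (Fin n → F2))) : Prop :=
  (∀ S ∈ H, (S : Set (Fin n → F2)).Nonempty ∧ Module.finrank F2 S.direction = n - d) ∧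
  (∀ x : Fin n → F2, x ≠ 0 → k ≤ covCount n H x) ∧
  covCount n H 0 = s

/-- Minimum cardinality of a (k,d)-cover of 𝔽₂ⁿ. -/
def f (n k d : ℕ) : ℕ := sInf {m | ∃ H, IsCover n k d H ∧ Multiset.card H = m}

/-- Minimum cardinality of a (k,d;s)-cover of 𝔽₂ⁿ. -/
def g (n k d s : ℕ) : ℕ := sInf {m | ∃ H, IsCoverExact n k d s H ∧ Multiset.card H = m}

end

noncomputable section Aux

/-- The linear functional `x ↦ ∑ i, α i * x i`. -/
def Lf (n : ℕ) (α : Fin n → F2) : (Fin n → F2) →ₗ[F2] F2 where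
  toFun x := ∑ i, α i * x i
  map_add' x y := by simp [mul_add, Finset.sum_add_distrib]
  map_smul' c x := by
    simp only [Pi.smul_apply, smul_eq_mul, RingHom.id_apply, Finset.mul_sum]
    congr 1; ext i; ring

/-- The affine hyperplane `{x | ⟨α, x⟩ = c}`. -/
def hyp (n : ℕ) (α : Fin n → F2) (c : F2) : AffineSubspace F2 (Fin n → F2) where
  carrier := {x | Lf n α x = c}
  smul_vsub_vadd_mem' t p₁ p₂ p₃ h₁ h₂ h₃ := by
    simp only [Set.mem_setOf_eq, vsub_eq_sub, vadd_eq_add, map_add, map_smul, map_sub,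
      smul_eq_mul] at *
    rw [h₁, h₂, h₃]; ring

lemma mem_hyp {n : ℕ} {α : Fin n → F2} {c : F2} {x : Fin n → F2} :
    x ∈ hyp n α c ↔ Lf n α x = c := Iff.rfl

lemma Lf_single {n : ℕ} (α : Fin n → F2) (i : Fin n) (c : F2) :
    Lf n α (Pi.single i c) = α i * c := by
  simp only [Lf, LinearMap.coe_mk, AddHom.coe_mk]
  rw [Finset.sum_eq_single i]
  · simp
  · intro b _ hb; simp [Pi.single_apply, hb]
  · simp

lemma hyp_nonempty {n : ℕ} (α : Fin n → F2) (c : F2) (i : Fin n) (hi : α i = 1) :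
    ((hyp n α c : Set (Fin n → F2))).Nonempty := by
  refine ⟨Pi.single i c, ?_⟩
  show Lf n α (Pi.single i c) = c
  rw [Lf_single, hi, one_mul]

lemma hyp_finrank {n : ℕ} (α : Fin n → F2) (c : F2) (i : Fin n) (hi : α i = 1) :
    Module.finrank F2 (hyp n α c).direction = n - 1 := by
  have hmk : hyp n α c
      = AffineSubspace.mk' (Pi.single i c : Fin n → F2) (LinearMap.ker (Lf n α)) := by
    ext x
    rw [mem_hyp, AffineSubspace.mem_mk', LinearMap.mem_ker, vsub_eq_sub,
      map_sub, Lf_single, hi, one_mul, sub_eq_zero]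
  rw [hmk, AffineSubspace.direction_mk']
  have hsurj : LinearMap.range (Lf n α) = ⊤ := by
    rw [LinearMap.range_eq_top]
    intro y
    exact ⟨Pi.single i y, by rw [Lf_single, hi, one_mul]⟩
  have h1 := LinearMap.finrank_range_add_finrank_ker (Lf n α)
  rw [hsurj] at h1
  have h2 : Module.finrank F2 (⊤ : Submodule F2 F2) = 1 := by
    rw [finrank_top]; exact Module.finrank_self F2
  have h3 : Module.finrank F2 (Fin n → F2) = n := by
    rw [Module.finrank_pi]; simp
  omega

lemma countP_replicate' {α : Type*} (p : α → Prop) [DecidablePred p] (a : α) (m : ℕ) :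
    Multiset.countP p (Multiset.replicate m a) = if p a then m else 0 := by
  induction m with
  | zero => simp
  | succ m ih =>
      rw [Multiset.replicate_succ, Multiset.countP_cons, ih]
      split_ifs <;> omega

lemma countP_val {α : Type*} (p : α → Prop) [DecidablePred p] (s : Finset α) :
    Multiset.countP p s.val = (s.filter p).card := by
  rw [Multiset.countP_eq_card_filter, ← Finset.filter_val]
  rfl

lemma two_cases (a : F2) : a = 0 ∨ a = 1 := by
  revert a; decide

section Main

variable (m : ℕ)

/-- The set of nonzero indices. -/
abbrev Inz : Finset (Fin (m + 4)) := Finset.univ.erase 0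

/-- The linear form `x ↦ ∑_{i ≠ 0} x i`. -/
abbrev sform : Fin (m + 4) → F2 := fun j => if j = 0 then 0 else 1

/-- The direction form `x₀ + xᵢ`. -/
abbrev dform (i : Fin (m + 4)) : Fin (m + 4) → F2 := Pi.single 0 1 + Pi.single i 1

/-- The cover: `(k-4) × {x₀ = 0}`, `{xᵢ = 1}` and `{x₀ + xᵢ = 1}` for each `i ≠ 0`,
`{∑_{i≠0} xᵢ = 1}`, and `{∑ᵢ xᵢ = 1}`. -/
def Hcov : Multiset (AffineSubspace F2 (Fin (m + 4) → F2)) :=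
  Multiset.replicate m (hyp (m + 4) (Pi.single 0 1) 0)
    + (Inz m).val.map (fun i => hyp (m + 4) (Pi.single i 1) 1)
    + (Inz m).val.map (fun i => hyp (m + 4) (dform m i) 1)
    + {hyp (m + 4) (sform m) 1, hyp (m + 4) 1 1}

lemma card_Inz : (Inz m).card = m + 3 := by
  rw [Finset.card_erase_of_mem (Finset.mem_univ _), Finset.card_univ, Fintype.card_fin]
  omega

lemma card_Hcov : Multiset.card (Hcov m) = 3 * (m + 4) - 4 := by
  simp only [Hcov, Multiset.card_add, Multiset.card_replicate, Multiset.card_map,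
    Multiset.insert_eq_cons, Multiset.card_cons, Multiset.card_singleton]
  have h : ((Inz m).val.card) = m + 3 := card_Inz m
  omega

lemma Lf_eval (x : Fin (m + 4) → F2) (i : Fin (m + 4)) :
    Lf (m + 4) (Pi.single i 1) x = x i := by
  simp only [Lf, LinearMap.coe_mk, AddHom.coe_mk]
  rw [Finset.sum_eq_single i]
  · simp
  · intro b _ hb; simp [Pi.single_apply, hb]
  · simp

lemma Lf_add (α β : Fin (m + 4) → F2) (x : Fin (m + 4) → F2) :
    Lf (m + 4) (α + β) x = Lf (m + 4) α x + Lf (m + 4) β x := by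
  simp [Lf, add_mul, Finset.sum_add_distrib]

lemma Lf_sform (x : Fin (m + 4) → F2) :
    Lf (m + 4) (sform m) x = ∑ j ∈ Inz m, x j := by
  simp only [Lf, LinearMap.coe_mk, AddHom.coe_mk, sform]
  rw [← Finset.add_sum_erase _ _ (Finset.mem_univ (0 : Fin (m + 4)))]
  rw [if_pos rfl, zero_mul, zero_add]
  refine Finset.sum_congr rfl fun j hj => ?_
  rw [if_neg (Finset.ne_of_mem_erase hj), one_mul]

lemma Lf_one (x : Fin (m + 4) → F2) :
    Lf (m + 4) 1 x = x 0 + ∑ j ∈ Inz m, x j := by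
  simp only [Lf, LinearMap.coe_mk, AddHom.coe_mk, Pi.one_apply, one_mul]
  rw [← Finset.add_sum_erase _ _ (Finset.mem_univ (0 : Fin (m + 4)))]

lemma covCount_Hcov (x : Fin (m + 4) → F2) :
    covCount (m + 4) (Hcov m) x =
      ((((if x 0 = 0 then m else 0)
      + ((Inz m).filter (fun i => x i = 1)).card)
      + ((Inz m).filter (fun i => x 0 + x i = 1)).card)
      + (if (∑ j ∈ Inz m, x j) = 1 then 1 else 0))
      + (if (x 0 + ∑ j ∈ Inz m, x j) = 1 then 1 else 0) := by
  have h1 : Multiset.countP (fun S => x ∈ S)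
      (Multiset.replicate m (hyp (m + 4) (Pi.single 0 1) 0)) = if x 0 = 0 then m else 0 := by
    rw [countP_replicate']
    simp only [mem_hyp, Lf_eval]
  have h2 : Multiset.countP (fun S => x ∈ S)
      ((Inz m).val.map (fun i => hyp (m + 4) (Pi.single i 1) 1))
      = ((Inz m).filter (fun i => x i = 1)).card := by
    rw [Multiset.countP_map, ← Multiset.countP_eq_card_filter, ← countP_val]
    exact Multiset.countP_congr rfl fun i _ => by
      rw [eq_iff_iff, mem_hyp, Lf_eval]
  have h3 : Multiset.countP (fun S => x ∈ S)
      ((Inz m).val.map (fun i => hyp (m + 4) (dform m i) 1))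
      = ((Inz m).filter (fun i => x 0 + x i = 1)).card := by
    rw [Multiset.countP_map, ← Multiset.countP_eq_card_filter, ← countP_val]
    exact Multiset.countP_congr rfl fun i _ => by
      rw [eq_iff_iff, mem_hyp, dform, Lf_add, Lf_eval, Lf_eval]
  have h4 : Multiset.countP (fun S => x ∈ S)
      ({hyp (m + 4) (sform m) 1, hyp (m + 4) 1 1} :
        Multiset (AffineSubspace F2 (Fin (m + 4) → F2)))
      = (if (∑ j ∈ Inz m, x j) = 1 then 1 else 0)
        + (if (x 0 + ∑ j ∈ Inz m, x j) = 1 then 1 else 0) := by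
    rw [Multiset.insert_eq_cons, Multiset.countP_cons,
      show ({hyp (m + 4) 1 1} : Multiset (AffineSubspace F2 (Fin (m + 4) → F2)))
        = hyp (m + 4) 1 1 ::ₘ 0 from rfl,
      Multiset.countP_cons, Multiset.countP_zero]
    simp only [mem_hyp, Lf_sform, Lf_one]
    split_ifs <;> omega
  show Multiset.countP (fun S => x ∈ S) (Hcov m) = _
  rw [Hcov, Multiset.countP_add, Multiset.countP_add, Multiset.countP_add, h1, h2, h3, h4]
  omega

lemma sum_Inz_eq (x : Fin (m + 4) → F2) :
    (∑ j ∈ Inz m, x j) = (((Inz m).filter (fun i => x i = 1)).card : F2) := by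
  rw [← Finset.sum_boole]
  refine Finset.sum_congr rfl fun j _ => ?_
  rcases two_cases (x j) with h | h <;> simp [h]

lemma one_ne_zero_fin : (1 : Fin (m + 4)) ≠ 0 := by
  have h1 : ((1 : Fin (m + 4)) : ℕ) = 1 := by rw [Fin.val_one']; exact Nat.mod_eq_of_lt (by omega)
  intro h
  rw [h] at h1
  simp at h1

lemma isCover_Hcov : IsCover (m + 4) (m + 4) 1 (Hcov m) := by
  refine ⟨?_, ?_, ?_⟩
  · -- dimensions
    intro S hS
    simp only [Hcov, Multiset.mem_add, Multiset.mem_replicate, Multiset.mem_map,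
      Multiset.insert_eq_cons, Multiset.mem_cons, Multiset.mem_singleton] at hS
    rcases hS with (((⟨-, rfl⟩ | ⟨i, hi, rfl⟩) | ⟨i, hi, rfl⟩) | rfl | rfl)
    · exact ⟨hyp_nonempty _ _ 0 (by simp), hyp_finrank _ _ 0 (by simp)⟩
    · exact ⟨hyp_nonempty _ _ i (by simp), hyp_finrank _ _ i (by simp)⟩
    · have hi0 : (0 : Fin (m + 4)) ≠ i := by
        rw [Finset.mem_val, Finset.mem_erase] at hi
        exact fun h => hi.1 h.symm
      have hα : dform m i 0 = 1 := by
        simp only [dform, Pi.add_apply, Pi.single_eq_same, Pi.single_eq_of_ne hi0, add_zero]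
      exact ⟨hyp_nonempty _ _ 0 hα, hyp_finrank _ _ 0 hα⟩
    · have hα : sform m 1 = 1 := by simp [one_ne_zero_fin m]
      exact ⟨hyp_nonempty _ _ 1 hα, hyp_finrank _ _ 1 hα⟩
    · exact ⟨hyp_nonempty _ _ 0 rfl, hyp_finrank _ _ 0 rfl⟩
  · -- coverage of nonzero points
    intro x hx
    rw [covCount_Hcov]
    set w := ((Inz m).filter (fun i => x i = 1)).card with hw
    have hsum : (∑ j ∈ Inz m, x j) = (w : F2) := sum_Inz_eq m x
    rcases two_cases (x 0) with h0 | h0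
    · -- x 0 = 0
      have hwpos : 1 ≤ w := by
        have hne : ∃ i, x i = 1 := by
          by_contra hc
          push_neg at hc
          apply hx
          funext i
          rcases two_cases (x i) with h | h
          · exact h
          · exact absurd h (hc i)
        obtain ⟨i, hi⟩ := hne
        have hi0 : i ≠ 0 := fun h => by
          rw [h, h0] at hi; exact absurd hi (by decide)
        rw [hw]
        refine Finset.card_pos.mpr ⟨i, Finset.mem_filter.mpr ⟨Finset.mem_erase.mpr
          ⟨hi0, Finset.mem_univ _⟩, hi⟩⟩
      have hfilter2 : ((Inz m).filter (fun i => x 0 + x i = 1)).card = w := by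
        rw [hw]
        refine congrArg Finset.card (Finset.filter_congr fun i _ => ?_)
        rw [h0, zero_add]
      rw [hfilter2, if_pos h0, hsum]
      rcases two_cases ((w : F2)) with hpar | hpar
      · have hdvd : 2 ∣ w := (ZMod.natCast_eq_zero_iff w 2).mp hpar
        rw [hpar, if_neg (show ¬ ((0 : F2) = 1) by decide),
          if_neg (show ¬ (x 0 + 0 = 1) by rw [h0]; decide)]
        omega
      · rw [hpar, if_pos rfl, if_pos (show x 0 + 1 = 1 by rw [h0]; decide)]
        omega
    · -- x 0 = 1
      have hfilter2 : w + ((Inz m).filter (fun i => x 0 + x i = 1)).card = m + 3 := by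
        have hcongr : (Inz m).filter (fun i => x 0 + x i = 1)
            = (Inz m).filter (fun i => ¬ (x i = 1)) := by
          refine Finset.filter_congr fun i _ => ?_
          rw [h0]
          rcases two_cases (x i) with h | h <;> rw [h] <;> decide
        rw [hcongr, hw, Finset.card_filter_add_card_filter_not, card_Inz]
      rw [if_neg (show ¬ (x 0 = 0) by rw [h0]; decide), hsum]
      rcases two_cases ((w : F2)) with hpar | hpar
      · rw [hpar, if_neg (show ¬ ((0 : F2) = 1) by decide),
          if_pos (show x 0 + 0 = 1 by rw [h0]; decide)]
        omega
      · rw [hpar, if_pos rfl, if_neg (show ¬ (x 0 + 1 = 1) by rw [h0]; decide)]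
        omega
  · -- origin
    rw [covCount_Hcov]
    have hne : ¬ ((0 : F2) = 1) := by decide
    simp [hne]

end Main

end Aux

theorem stmt14 (k : ℕ) (hk : 4 ≤ k) :
    f k k 1 ≤ 3 * k - 4 := by
  obtain ⟨m, rfl⟩ : ∃ m, k = m + 4 := ⟨k - 4, by omega⟩
  exact Nat.sInf_le ⟨Hcov m, isCover_Hcov m, card_Hcov m⟩
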